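/- Let f be a sigmoidal efficiency function and let γ* be the unique positive solution of f(γ) = γ f′(γ). Then the function γ ↦ f(γ)/γ is strictly increasing on (0,γ*) and strictly decreasing on (γ*,∞); in particular, γ* is the unique maximizer of f(γ)/γ over γ > 0. -/

import Mathlib

/-- For a sigmoidal efficiency function `f` with `γ*` the unique positive
solution of `f γ = γ f' γ`, the map `γ ↦ f γ / γ` is strictly increasing on `(0,γ*)`,
strictly decreasing on `(γ*,∞)`, and `γ*` is its unique maximizer over `γ > 0`. -/
theorem sigmoidal_f_over_gamma_unimodal (f f' f'' : ℝ → ℝ)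
    (hcontf : ContinuousOn f (Set.Ici 0))
    (hderiv : ∀ x : ℝ, 0 < x → HasDerivAt f (f' x) x)
    (hcontf' : ContinuousOn f' (Set.Ioi 0))
    (hderiv2 : ∀ x : ℝ, 0 < x → HasDerivAt f' (f'' x) x)
    (hf0 : f 0 = 0)
    (hf'pos : ∀ x : ℝ, 0 < x → 0 < f' x)
    (hrange : ∀ x : ℝ, 0 ≤ x → 0 ≤ f x ∧ f x < 1)
    (hlim : Filter.Tendsto f Filter.atTop (nhds 1))
    (a : ℝ) (ha : 0 < a)
    (hconvex : ∀ x : ℝ, 0 < x → x < a → 0 < f'' x)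
    (hconcave : ∀ x : ℝ, a < x → f'' x < 0)
    (g : ℝ) (hg : 0 < g) (hgeq : f g = g * f' g)
    (hguniq : ∀ g' : ℝ, 0 < g' → f g' = g' * f' g' → g' = g) :
    StrictMonoOn (fun γ : ℝ => f γ / γ) (Set.Ioo 0 g) ∧
    StrictAntiOn (fun γ : ℝ => f γ / γ) (Set.Ioi g) ∧
    (∀ γ : ℝ, 0 < γ → γ ≠ g → f γ / γ < f g / g) := by
  -- derivative of φ := x * f' x - f x
  have hφderiv : ∀ x : ℝ, 0 < x → HasDerivAt (fun x => x * f' x - f x) (x * f'' x) x := by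
    intro x hx
    have h1 : HasDerivAt (fun y => y * f' y - f y) (1 * f' x + x * f'' x - f' x) x := ((hasDerivAt_id x).mul (hderiv2 x hx)).sub (hderiv x hx)
    convert h1 using 1
    ring
  -- f' strictly increasing on (0,a]
  have hf'mono : StrictMonoOn f' (Set.Ioc 0 a) := by
    apply strictMonoOn_of_deriv_pos (convex_Ioc 0 a)
    · exact hcontf'.mono (fun x hx => hx.1)
    · intro x hx
      rw [interior_Ioc] at hx
      rw [(hderiv2 x hx.1).deriv]
      exact hconvex x hx.1 hx.2
  -- φ positive on (0,a]
  have hφpos : ∀ x : ℝ, 0 < x → x ≤ a → f x < x * f' x := by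
    intro x hx hxa
    obtain ⟨c, hc, hc'⟩ := exists_hasDerivAt_eq_slope f f' hx
      (hcontf.mono (fun y hy => hy.1)) (fun y hy => hderiv y hy.1)
    have hfc : f x = x * f' c := by
      rw [hc', hf0]
      field_simp
      rw [sub_zero, sub_zero, mul_div_cancel_left₀ _ hx.ne']
    have hlt : f' c < f' x :=
      hf'mono ⟨hc.1, le_of_lt (lt_of_lt_of_le hc.2 hxa)⟩ ⟨hx, hxa⟩ hc.2
    rw [hfc]
    exact (mul_lt_mul_iff_right₀ hx).mpr hlt
  -- φ strictly decreasing on [a,∞)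
  have hφanti : StrictAntiOn (fun x => x * f' x - f x) (Set.Ici a) := by
    apply strictAntiOn_of_deriv_neg (convex_Ici a)
    · have hsub : Set.Ici a ⊆ Set.Ioi 0 := fun x hx => lt_of_lt_of_le ha hx
      exact (continuousOn_id.mul (hcontf'.mono hsub)).sub
        (hcontf.mono (fun x hx => Set.mem_Ici.mpr (le_of_lt (hsub hx))))
    · intro x hx
      rw [interior_Ici] at hx
      have hx0 : (0:ℝ) < x := lt_trans ha hx
      rw [(hφderiv x hx0).deriv]
      exact mul_neg_of_pos_of_neg hx0 (hconcave x hx)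
  have hφg : g * f' g - f g = 0 := by linarith [hgeq]
  -- a < g
  have hag : a < g := by
    by_contra hle
    push_neg at hle
    have := hφpos g hg hle
    linarith
  -- sign of φ
  have hsign1 : ∀ x : ℝ, 0 < x → x < g → 0 < x * f' x - f x := by
    intro x hx hxg
    rcases le_or_gt x a with h1 | h1
    · linarith [hφpos x hx h1]
    · have := hφanti (le_of_lt h1) (le_of_lt hag) hxg
      dsimp at this
      linarith
  have hsign2 : ∀ x : ℝ, g < x → x * f' x - f x < 0 := by
    intro x hxg
    have := hφanti (le_of_lt hag) (le_of_lt (lt_trans hag hxg)) hxg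
    dsimp at this
    linarith
  -- derivative of h := f x / x
  have hhderiv : ∀ x : ℝ, 0 < x →
      HasDerivAt (fun γ : ℝ => f γ / γ) ((f' x * x - f x * 1) / x ^ 2) x := by
    intro x hx
    exact (hderiv x hx).div (hasDerivAt_id x) (ne_of_gt hx)
  -- strict mono on (0,g]
  have hmono : StrictMonoOn (fun γ : ℝ => f γ / γ) (Set.Ioc 0 g) := by
    apply strictMonoOn_of_deriv_pos (convex_Ioc 0 g)
    · exact (hcontf.mono (fun x hx => le_of_lt hx.1)).div continuousOn_id
        (fun x hx => ne_of_gt hx.1)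
    · intro x hx
      rw [interior_Ioc] at hx
      rw [(hhderiv x hx.1).deriv]
      apply div_pos _ (pow_pos hx.1 2)
      have := hsign1 x hx.1 hx.2
      nlinarith
  -- strict anti on [g,∞)
  have hanti : StrictAntiOn (fun γ : ℝ => f γ / γ) (Set.Ici g) := by
    apply strictAntiOn_of_deriv_neg (convex_Ici g)
    · exact (hcontf.mono (fun x hx => le_of_lt (lt_of_lt_of_le hg hx))).div continuousOn_id
        (fun x hx => ne_of_gt (lt_of_lt_of_le hg hx))
    · intro x hx
      rw [interior_Ici] at hx
      have hx0 : (0:ℝ) < x := lt_trans hg hx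
      rw [(hhderiv x hx0).deriv]
      apply div_neg_of_neg_of_pos _ (pow_pos hx0 2)
      have := hsign2 x hx
      nlinarith
  refine ⟨hmono.mono (fun x hx => ⟨hx.1, le_of_lt hx.2⟩),
    hanti.mono (fun x hx => Set.mem_Ici.mpr (le_of_lt hx)), ?_⟩
  intro γ hγ hne
  rcases lt_or_gt_of_ne hne with h | h
  · exact hmono ⟨hγ, le_of_lt h⟩ ⟨hg, le_refl g⟩ h
  · exact hanti (le_refl g) (le_of_lt h) h
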